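/- Let L be a noncommutative finite-dimensional Lie algebra over a field F with derived subalgebra L¹ = ⁅L, L⁆ and center Z(L). If dim L¹ < dim Z(L), then L is decomposable: there exist Lie ideals I, J of L with I ≠ 0, J ≠ 0, I ∩ J = 0 and I + J = L. -/

import Mathlib

/-- a noncommutative finite-dimensional Lie algebra whose derived subalgebra has
dimension strictly smaller than that of its center is decomposable. -/
theorem stmt10 (F : Type*) [Field F] (L : Type*) [LieRing L] [LieAlgebra F L]
    [Module.Finite F L]
    (hnc : ∃ x y : L, ⁅x, y⁆ ≠ 0)
    (hdim : Module.finrank F (LieAlgebra.derivedSeries F L 1).toSubmodule <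
      Module.finrank F (LieAlgebra.center F L).toSubmodule) :
    ∃ I J : LieIdeal F L, I ≠ ⊥ ∧ J ≠ ⊥ ∧ I ⊓ J = ⊥ ∧ I ⊔ J = ⊤ := by
  classical
  set Z : Submodule F L := (LieAlgebra.center F L).toSubmodule with hZ
  set D : Submodule F L := (LieAlgebra.derivedSeries F L 1).toSubmodule with hD
  -- Choose a complement C' of (Z ⊓ D) inside Z
  obtain ⟨C', hC'⟩ := Submodule.exists_isCompl (Submodule.comap Z.subtype D)
  set C : Submodule F L := C'.map Z.subtype with hC
  have hCZ : C ≤ Z := by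
    rintro x ⟨c, -, rfl⟩; exact c.2
  have hCD : C ⊓ D = ⊥ := by
    rw [eq_bot_iff]
    rintro x ⟨⟨c, hc, rfl⟩, hxD⟩
    have : c ∈ Submodule.comap Z.subtype D ⊓ C' := ⟨hxD, hc⟩
    rw [hC'.inf_eq_bot] at this
    simpa using congrArg (Z.subtype) this
  -- C is nonzero
  have hmapcomap : (Submodule.comap Z.subtype D).map Z.subtype = Z ⊓ D :=
    Submodule.map_comap_subtype Z D
  have hrankC : Module.finrank F C = Module.finrank F C' :=
    (Submodule.equivMapOfInjective Z.subtype Z.injective_subtype C').symm.finrank_eq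
  have hsum : Module.finrank F (Submodule.comap Z.subtype D) + Module.finrank F C'
      = Module.finrank F Z := by
    have h := Submodule.finrank_sup_add_finrank_inf_eq (Submodule.comap Z.subtype D) C'
    rw [hC'.sup_eq_top, hC'.inf_eq_bot] at h
    simp only [finrank_bot, add_zero, finrank_top] at h
    omega
  have hle : Module.finrank F (Submodule.comap Z.subtype D) ≤ Module.finrank F D := by
    have h1 : Module.finrank F (Submodule.comap Z.subtype D)
        = Module.finrank F ((Submodule.comap Z.subtype D).map Z.subtype) :=
      ((Submodule.comap Z.subtype D).equivMapOfInjective Z.subtype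
        Z.injective_subtype).finrank_eq
    rw [h1, hmapcomap]
    exact Submodule.finrank_mono inf_le_right
  have hCpos : 0 < Module.finrank F C := by omega
  have hCne : C ≠ ⊥ := by
    intro h
    rw [h] at hCpos
    simp at hCpos
  -- Choose M ⊇ D complementary to C, via the quotient by D
  obtain ⟨M', hM'⟩ := Submodule.exists_isCompl (C.map D.mkQ)
  set M : Submodule F L := M'.comap D.mkQ with hM
  have hDM : D ≤ M := by
    intro x hx
    simp [hM, Submodule.mem_comap, (Submodule.Quotient.mk_eq_zero D).2 hx]
  have hMC : M ⊓ C = ⊥ := by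
    rw [eq_bot_iff]
    rintro x ⟨hxM, hxC⟩
    have : D.mkQ x ∈ C.map D.mkQ ⊓ M' := ⟨⟨x, hxC, rfl⟩, hxM⟩
    rw [hM'.inf_eq_bot] at this
    have hxD : x ∈ D := (Submodule.Quotient.mk_eq_zero D).1 this
    have : x ∈ C ⊓ D := ⟨hxC, hxD⟩
    rw [hCD] at this; exact this
  have hMCtop : M ⊔ C = ⊤ := by
    rw [eq_top_iff]
    intro x _
    have : D.mkQ x ∈ C.map D.mkQ ⊔ M' := by rw [hM'.sup_eq_top]; trivial
    obtain ⟨c, hc, m, hm, hmc⟩ := Submodule.mem_sup.1 this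
    obtain ⟨c₀, hc₀, rfl⟩ := hc
    have hxm : x - c₀ ∈ M := by
      simp only [hM, Submodule.mem_comap, map_sub]
      rw [show D.mkQ x - D.mkQ c₀ = m from by rw [← hmc]; abel]
      exact hm
    have : (x - c₀) + c₀ ∈ M ⊔ C := Submodule.add_mem_sup hxm hc₀
    simpa using this
  -- Build the two Lie ideals
  refine ⟨{ C with lie_mem := ?_ }, { M with lie_mem := ?_ }, ?_, ?_, ?_, ?_⟩
  · intro x m hm
    have hz : m ∈ LieAlgebra.center F L := hCZ hm
    have : ⁅x, m⁆ = 0 := by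
      have := (LieModule.mem_maxTrivSubmodule F L L m).1 hz x
      exact this
    rw [this]; exact C.zero_mem
  · intro x m hm
    refine hDM ?_
    have : ⁅x, m⁆ ∈ ⁅(⊤ : LieIdeal F L), (⊤ : LieIdeal F L)⁆ :=
      LieSubmodule.lie_mem_lie (LieSubmodule.mem_top x) (LieSubmodule.mem_top m)
    simpa [hD, LieAlgebra.derivedSeries] using this
  · intro h
    exact hCne (by simpa using congrArg LieSubmodule.toSubmodule h)
  · intro h
    have hMb : M = ⊥ := by simpa using congrArg LieSubmodule.toSubmodule h
    obtain ⟨x, y, hxy⟩ := hnc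
    have hxyD : ⁅x, y⁆ ∈ D := by
      have : ⁅x, y⁆ ∈ ⁅(⊤ : LieIdeal F L), (⊤ : LieIdeal F L)⁆ :=
        LieSubmodule.lie_mem_lie (LieSubmodule.mem_top x) (LieSubmodule.mem_top y)
      simpa [hD, LieAlgebra.derivedSeries] using this
    have : ⁅x, y⁆ ∈ M := hDM hxyD
    rw [hMb] at this
    exact hxy (by simpa using this)
  · apply LieSubmodule.toSubmodule_injective
    rw [LieSubmodule.inf_toSubmodule]
    simpa using inf_comm C M ▸ hMC
  · apply LieSubmodule.toSubmodule_injective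
    rw [LieSubmodule.sup_toSubmodule]
    simpa using sup_comm C M ▸ hMCtop
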